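/- Let m and p be positive integers, l = 4mp + 2p − 1 and t = 4mp − 1, so that p' = (l−1)/2 = (2m+1)p − 1. Then for every j with 1 ≤ j ≤ p': σ_j = 1 if j mod (2m+1) lies in {1, 2, …, m}, and σ_j = −1 if j mod (2m+1) lies in {0} ∪ {m+1, …, 2m}. -/
import Mathlib


/-- `σ_j = (-1)^{⌊(2j-1)t/l⌋}`. -/
def sigmaF (l t j : ℕ) : ℤ := (-1) ^ ((2 * j - 1) * t / l)

/-- `r(j)`: the unique integer with `r(j) ≡ (2j-1)t (mod 2l)` and `-l < r(j) < l`. -/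
def rF (l t j : ℕ) : ℤ :=
  if (((2 * j - 1) * t : ℕ) : ℤ) % (2 * l) < l then (((2 * j - 1) * t : ℕ) : ℤ) % (2 * l)
  else (((2 * j - 1) * t : ℕ) : ℤ) % (2 * l) - 2 * l

/-- `r'(j) = (|r(j)| + 1)/2`. -/
def rpF (l t j : ℕ) : ℤ := (|rF l t j| + 1) / 2

lemma div_key (l N Q r : ℕ) (hl0 : 0 < l) (hN : N = l * Q + r) (hr : r < l) :
    N / l = Q := by
  subst hN
  rw [Nat.mul_add_div hl0, Nat.div_eq_of_lt hr, Nat.add_zero]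

theorem stmt2 (m p l t p' : ℕ) (hm : 1 ≤ m) (hp : 1 ≤ p)
    (hl : l = 4*m*p + 2*p - 1) (ht : t = 4*m*p - 1) (hp' : p' = (2*m+1)*p - 1) :
    ∀ j : ℕ, 1 ≤ j → j ≤ p' →
      sigmaF l t j =
        if 1 ≤ j % (2*m+1) ∧ j % (2*m+1) ≤ m then 1 else -1 := by
  have hmp : 1 ≤ m * p := Nat.one_le_iff_ne_zero.2 (by positivity)
  have b1 : 4*m*p = 4*(m*p) := by ring
  have h1 : 1 ≤ 4*m*p + 2*p := by omega
  have h2 : 1 ≤ 4*m*p := by omega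
  have hlZ : (l:ℤ) = 4*m*p + 2*p - 1 := by
    subst hl; push_cast [Nat.cast_sub h1]; ring
  have htZ : (t:ℤ) = 4*m*p - 1 := by
    subst ht; push_cast [Nat.cast_sub h2]; ring
  have hl0 : 0 < l := by omega
  intro j hj1 hj2
  set s := j % (2*m+1) with hs
  set q := j / (2*m+1) with hq
  have hjqs : (2*m+1) * q + s = j := Nat.div_add_mod j (2*m+1)
  have hsM : s < 2*m+1 := Nat.mod_lt _ (by omega)
  clear_value s q
  have b5 : (2*m+1)*q = 2*(m*q) + q := by ring
  have hjle : j ≤ (2*m+1)*p - 1 := by rwa [hp'] at hj2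
  have hqp : q < p := by
    by_contra h
    push_neg at h
    have h5 : (2*m+1)*p ≤ (2*m+1)*q := Nat.mul_le_mul_left _ h
    have h3 : (2*m+1)*q ≤ j := Nat.le.intro hjqs
    have h4 : 1 ≤ (2*m+1)*p := Nat.one_le_iff_ne_zero.2 (by positivity)
    omega
  have hjZ : (j:ℤ) = (2*m+1)*q + s := by exact_mod_cast hjqs.symm
  rcases Nat.lt_or_ge s 1 with hcase | hcase
  · -- s = 0, sign is -1, quotient Q = 2j - 2q - 1 odd
    have hs0 : s = 0 := by omega
    have hq1 : 1 ≤ q := by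
      rcases Nat.eq_zero_or_pos q with h | h
      · exfalso; rw [h, hs0] at hjqs; simp at hjqs; omega
      · exact h
    have hmq : 1 ≤ m*q := Nat.one_le_iff_ne_zero.2 (by positivity)
    have hjq : 2*q + 1 ≤ 2*j := by omega
    have hrq : 2*q ≤ 2*p := by omega
    have hN : (2*j - 1)*t = l * (2*j - 2*q - 1) + (2*p - 2*q) := by
      zify [show 1 ≤ 2*j by omega, show 2*q ≤ 2*j by omega,
        show 1 ≤ 2*j - 2*q by omega, hrq]
      rw [hlZ, htZ]
      have hjZ' : (j:ℤ) = (2*m+1)*q := by rw [hjZ, hs0]; push_cast; ring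
      linear_combination (-4*(p:ℤ)) * hjZ'
    have hrlt : 2*p - 2*q < l := by omega
    rw [sigmaF, div_key l _ _ _ hl0 hN hrlt]
    have hodd : Odd (2*j - 2*q - 1) := ⟨j - q - 1, by omega⟩
    rw [hodd.neg_one_pow]
    simp [hs0]
  · rcases Nat.lt_or_ge m s with hcase2 | hcase2
    · -- m+1 ≤ s ≤ 2m, sign is -1, quotient Q = 2j - 2q - 3 odd
      have hpsl : p*(m+1) ≤ p*s := Nat.mul_le_mul_left p hcase2
      have hpsu : p*s ≤ p*(2*m) := Nat.mul_le_mul_left p (by omega)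
      have c1 : p*(m+1) = m*p + p := by ring
      have c2 : p*(2*m) = 2*(m*p) := by ring
      have c3 : 4*p*s = 4*(p*s) := by ring
      have hjq : 2*q + 3 ≤ 2*j := by omega
      have hrq : 2*q + 4*p*s ≤ 2*l + 2*p := by omega
      have hN : (2*j - 1)*t = l * (2*j - 2*q - 3) + (2*l + 2*p - (2*q + 4*p*s)) := by
        zify [show 1 ≤ 2*j by omega, show 2*q ≤ 2*j by omega,
          show 3 ≤ 2*j - 2*q by omega, hrq]
        rw [hlZ, htZ]
        linear_combination (-4*(p:ℤ)) * hjZ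
      have hrlt : 2*l + 2*p - (2*q + 4*p*s) < l := by omega
      rw [sigmaF, div_key l _ _ _ hl0 hN hrlt]
      have hodd : Odd (2*j - 2*q - 3) := ⟨j - q - 2, by omega⟩
      rw [hodd.neg_one_pow]
      have hcond : ¬ (1 ≤ s ∧ s ≤ m) := by omega
      simp [hcond]
    · -- 1 ≤ s ≤ m, sign is 1, quotient Q = 2j - 2q - 2 even
      have hpsl : p*1 ≤ p*s := Nat.mul_le_mul_left p hcase
      have hpsu : p*s ≤ p*m := Nat.mul_le_mul_left p hcase2
      have c1 : p*1 = p := by ring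
      have c2 : p*m = m*p := by ring
      have c3 : 4*p*s = 4*(p*s) := by ring
      have hjq : 2*q + 2 ≤ 2*j := by omega
      have hrq : 2*q + 4*p*s ≤ l + 2*p := by omega
      have hN : (2*j - 1)*t = l * (2*j - 2*q - 2) + (l + 2*p - (2*q + 4*p*s)) := by
        zify [show 1 ≤ 2*j by omega, show 2*q ≤ 2*j by omega,
          show 2 ≤ 2*j - 2*q by omega, hrq]
        rw [hlZ, htZ]
        linear_combination (-4*(p:ℤ)) * hjZ
      have hrlt : l + 2*p - (2*q + 4*p*s) < l := by omega
      rw [sigmaF, div_key l _ _ _ hl0 hN hrlt]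
      have heven : Even (2*j - 2*q - 2) := ⟨j - q - 1, by omega⟩
      rw [heven.neg_one_pow]
      have hcond : 1 ≤ s ∧ s ≤ m := ⟨hcase, hcase2⟩
      simp [hcond]
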